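/- Let n ≥ 1 be an integer, let r, s be integers with r > 0 and s < 0, and let F : ℤ² → [0,∞) satisfy Σ_{(x,y)∈ℤ²} F(x,y)(|y|+1) < ∞. Then lim_{R→∞, R∈ℕ} (1/R) · Σ_{x₁=0}^{Rn−1} Σ_{x₂=0}^{Rn−1} Σ_{y₁∈ℤ, y₁ > rR} Σ_{y₂∈ℤ, y₂ ≤ sR} F(x₁−x₂, y₁−y₂) = 0. -/

import Mathlib

open Filter Topology

/-- Sum of a constant over an integer interval given by inequalities. -/
lemma band_hasSum (c : ℝ) (u v : ℤ) :
    HasSum (fun y : ℤ => if u < y ∧ y ≤ v then c else 0) (((v - u).toNat : ℝ) * c) := by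
  have h : ∀ y : ℤ, y ∉ Finset.Ioc u v → (if u < y ∧ y ≤ v then c else 0) = 0 := by
    intro y hy
    rw [Finset.mem_Ioc] at hy
    simp [hy]
  have H := hasSum_sum_of_ne_finset_zero (s := Finset.Ioc u v) (L := SummationFilter.unconditional ℤ) h
  have h1 : (∑ y ∈ Finset.Ioc u v, (if u < y ∧ y ≤ v then c else 0))
      = ∑ _y ∈ Finset.Ioc u v, c := by
    apply Finset.sum_congr rfl
    intro y hy
    rw [Finset.mem_Ioc] at hy
    simp [hy]
  have h2 : (∑ _y ∈ Finset.Ioc u v, c) = ((v - u).toNat : ℝ) * c := by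
    rw [Finset.sum_const, Int.card_Ioc, nsmul_eq_mul]
  rwa [h1, h2] at H

/-- Bound for the double sum over one pair of opposite bands, for a fixed
horizontal difference. -/
lemma inner_band_bound (f : ℤ → ℝ) (hf0 : ∀ d, 0 ≤ f d)
    (hfs : Summable fun d : ℤ => f d * (|(d : ℝ)| + 1))
    (R : ℕ) (u v : ℤ) (huv : 2 * (R : ℤ) ≤ u - v) :
    (∑' y₁ : ℤ, ∑' y₂ : ℤ, if u < y₁ ∧ y₂ ≤ v then f (y₁ - y₂) else 0)
      ≤ ∑' d : ℤ, f d * ((|(d : ℝ)| + 1) *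
          (if 2 * (R : ℤ) < d then 1 else 0)) := by
  classical
  set w : ℤ → ℝ := fun d => (|(d : ℝ)| + 1) * (if 2 * (R : ℤ) < d then 1 else 0) with hw
  set K : ℤ × ℤ → ℝ := fun p => if u < p.1 ∧ p.2 ≤ v then f (p.1 - p.2) else 0 with hK
  set e : ℤ × ℤ ≃ ℤ × ℤ :=
    { toFun := fun p => (p.1 + p.2, p.2)
      invFun := fun p => (p.1 - p.2, p.2)
      left_inv := fun p => by simp
      right_inv := fun p => by simp } with he
  set L : ℤ × ℤ → ℝ := fun q => K (e q) with hL
  have hLval : ∀ d y : ℤ, L (d, y) = if u - d < y ∧ y ≤ v then f d else 0 := by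
    intro d y
    simp only [hL, hK, he, Equiv.coe_fn_mk]
    by_cases h1 : u - d < y ∧ y ≤ v
    · rw [if_pos, if_pos h1]
      · congr 1; omega
      · constructor <;> omega
    · rw [if_neg, if_neg h1]
      intro h2; exact h1 ⟨by omega, h2.2⟩
  set c : ℤ → ℝ := fun d => ((v - (u - d)).toNat : ℝ) * f d with hc
  have hLsum : ∀ d : ℤ, HasSum (fun y => L (d, y)) (c d) := by
    intro d
    have := band_hasSum (f d) (u - d) v
    apply this.congr_fun
    intro y
    rw [hLval]
  -- the key counting bound
  have hcle : ∀ d : ℤ, c d ≤ f d * w d := by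
    intro d
    by_cases hd : 2 * (R : ℤ) < d
    · have h1 : ((v - (u - d)).toNat : ℝ) ≤ |(d : ℝ)| + 1 := by
        have h2' : v - (u - d) ≤ d := by omega
        have h2 : (v - (u - d)).toNat ≤ d.toNat := Int.toNat_le_toNat h2'
        have h3 : ((d.toNat : ℤ) : ℝ) ≤ |(d : ℝ)| + 1 := by
          rw [← Int.cast_abs]
          have : (d.toNat : ℤ) ≤ |d| + 1 := by
            rw [Int.abs_eq_natAbs]; omega
          exact_mod_cast this
        calc ((v - (u - d)).toNat : ℝ) ≤ (d.toNat : ℝ) := by exact_mod_cast h2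
          _ ≤ |(d : ℝ)| + 1 := by exact_mod_cast h3
      simp only [hw, hc, if_pos hd, mul_one]
      calc ((v - (u - d)).toNat : ℝ) * f d ≤ (|(d : ℝ)| + 1) * f d :=
            mul_le_mul_of_nonneg_right h1 (hf0 d)
        _ = f d * (|(d : ℝ)| + 1) := mul_comm _ _
    · have h0 : (v - (u - d)).toNat = 0 := by omega
      simp [hw, hc, hd, h0]
  have hwle : ∀ d : ℤ, f d * w d ≤ f d * (|(d : ℝ)| + 1) := by
    intro d
    apply mul_le_mul_of_nonneg_left _ (hf0 d)
    by_cases hd : 2 * (R : ℤ) < d <;> simp [hw, hd]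
    positivity
  have hc0 : ∀ d, 0 ≤ c d := fun d => mul_nonneg (Nat.cast_nonneg _) (hf0 d)
  have hfw0 : ∀ d, 0 ≤ f d * w d := by
    intro d
    apply mul_nonneg (hf0 d)
    by_cases hd : 2 * (R : ℤ) < d <;> simp [hw, hd] <;> positivity
  have hfwsum : Summable fun d => f d * w d :=
    hfs.of_nonneg_of_le hfw0 hwle
  have hcsum : Summable c :=
    hfwsum.of_nonneg_of_le hc0 (fun d => hcle d)
  have hL0 : ∀ q : ℤ × ℤ, 0 ≤ L q := by
    intro q
    rcases q with ⟨d, y⟩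
    rw [hLval]
    by_cases h : u - d < y ∧ y ≤ v <;> simp [h, hf0]
  have hLsummable : Summable L := by
    rw [summable_prod_of_nonneg hL0]
    refine ⟨fun d => (hLsum d).summable, ?_⟩
    apply hcsum.congr
    intro d
    exact ((hLsum d).tsum_eq).symm
  have hKsummable : Summable K := e.summable_iff.mp hLsummable
  have hKfib : ∀ y₁ : ℤ, Summable fun y₂ => K (y₁, y₂) := hKsummable.prod_factor
  calc (∑' y₁ : ℤ, ∑' y₂ : ℤ, if u < y₁ ∧ y₂ ≤ v then f (y₁ - y₂) else 0)
      = ∑' p : ℤ × ℤ, K p := (Summable.tsum_prod' hKsummable hKfib).symm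
    _ = ∑' q : ℤ × ℤ, L q := (e.tsum_eq K).symm
    _ = ∑' d : ℤ, ∑' y : ℤ, L (d, y) :=
        Summable.tsum_prod' hLsummable (fun d => (hLsum d).summable)
    _ = ∑' d : ℤ, c d := by
        apply tsum_congr; intro d; exact (hLsum d).tsum_eq
    _ ≤ ∑' d : ℤ, f d * w d := Summable.tsum_le_tsum hcle hcsum hfwsum


/-- the contribution of pairs of points in opposite unbounded
horizontal bands vanishes in the normalized limit. -/
theorem opposite_bands_limit_zero
    (n : ℕ) (hn : 1 ≤ n) (r s : ℤ) (hr : 0 < r) (hs : s < 0)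
    (F : ℤ × ℤ → ℝ) (hF0 : ∀ v, 0 ≤ F v)
    (hF : Summable fun v : ℤ × ℤ => F v * (|(v.2 : ℝ)| + 1)) :
    Tendsto
      (fun R : ℕ =>
        (1 / (R : ℝ)) *
          ∑ x₁ ∈ Finset.range (R * n), ∑ x₂ ∈ Finset.range (R * n),
            ∑' y₁ : ℤ, ∑' y₂ : ℤ,
              if r * (R : ℤ) < y₁ ∧ y₂ ≤ s * (R : ℤ)
              then F ((x₁ : ℤ) - (x₂ : ℤ), y₁ - y₂) else 0)
      atTop (𝓝 0) := by
  classical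
  -- the dominating tail sums
  set G : ℕ → ℤ × ℤ → ℝ := fun R v =>
    F v * ((|(v.2 : ℝ)| + 1) * (if 2 * (R : ℤ) < v.2 then 1 else 0)) with hG
  have hG0 : ∀ R v, 0 ≤ G R v := by
    intro R v
    apply mul_nonneg (hF0 v)
    by_cases h : 2 * (R : ℤ) < v.2 <;> simp [h] <;> positivity
  have hGle : ∀ R v, G R v ≤ F v * (|(v.2 : ℝ)| + 1) := by
    intro R v
    apply mul_le_mul_of_nonneg_left _ (hF0 v)
    by_cases h : 2 * (R : ℤ) < v.2 <;> simp [h]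
    positivity
  have hGsum : ∀ R, Summable (G R) := fun R =>
    hF.of_nonneg_of_le (hG0 R) (hGle R)
  set A : ℕ → ℝ := fun R => ∑' v : ℤ × ℤ, G R v with hA
  have hA0 : ∀ R, 0 ≤ A R := fun R => tsum_nonneg (hG0 R)
  -- A tends to zero by dominated convergence
  have hAtendsto : Tendsto A atTop (𝓝 0) := by
    have h0 : (0 : ℝ) = ∑' _v : ℤ × ℤ, (0 : ℝ) := by simp
    rw [h0]
    apply tendsto_tsum_of_dominated_convergence
      (bound := fun v : ℤ × ℤ => F v * (|(v.2 : ℝ)| + 1)) hF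
    · intro v
      apply Tendsto.congr' _ tendsto_const_nhds
      rw [EventuallyEq, eventually_atTop]
      refine ⟨v.2.toNat + 1, fun R hR => ?_⟩
      have hcond : ¬ (2 * (R : ℤ) < v.2) := by
        push_neg
        have : v.2 ≤ (v.2.toNat : ℤ) := Int.self_le_toNat v.2
        have hR' : (v.2.toNat : ℤ) + 1 ≤ (R : ℤ) := by exact_mod_cast hR
        omega
      simp [hG, hcond]
    · filter_upwards with R v
      rw [Real.norm_eq_abs, abs_of_nonneg (hG0 R v)]
      exact hGle R v
  -- bound the normalized sum by n * A R
  apply squeeze_zero' (g := fun R : ℕ => (n : ℝ) * A R)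
  · filter_upwards with R
    apply mul_nonneg (by positivity)
    apply Finset.sum_nonneg; intro x₁ _
    apply Finset.sum_nonneg; intro x₂ _
    apply tsum_nonneg; intro y₁
    apply tsum_nonneg; intro y₂
    by_cases h : r * (R : ℤ) < y₁ ∧ y₂ ≤ s * (R : ℤ) <;> simp [h, hF0]
  · rw [eventually_atTop]
    refine ⟨1, fun R hR => ?_⟩
    have hRpos : (0 : ℝ) < (R : ℝ) := by exact_mod_cast hR
    -- fiberwise summability facts for G R
    have hGfib : ∀ a : ℤ, Summable fun d => G R (a, d) := (hGsum R).prod_factor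
    set B : ℤ → ℝ := fun a => ∑' d : ℤ, G R (a, d) with hB
    have hB0 : ∀ a, 0 ≤ B a := fun a => tsum_nonneg (fun d => hG0 R (a, d))
    have hBsum : Summable B := by
      have := (summable_prod_of_nonneg (hG0 R)).mp (hGsum R)
      exact this.2
    have hBtsum : ∑' a : ℤ, B a = A R :=
      (Summable.tsum_prod' (hGsum R) hGfib).symm
    -- pointwise bound on the inner double tsum
    have hT : ∀ a : ℤ,
        (∑' y₁ : ℤ, ∑' y₂ : ℤ,
          if r * (R : ℤ) < y₁ ∧ y₂ ≤ s * (R : ℤ) then F (a, y₁ - y₂) else 0)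
        ≤ B a := by
      intro a
      have huv : 2 * (R : ℤ) ≤ r * (R : ℤ) - s * (R : ℤ) := by
        have h2 : (2 : ℤ) ≤ r - s := by omega
        have := mul_le_mul_of_nonneg_right h2 (by positivity : (0:ℤ) ≤ (R : ℤ))
        linarith [this]
      exact inner_band_bound (fun d => F (a, d)) (fun d => hF0 (a, d))
        (hF.prod_factor a) R (r * (R : ℤ)) (s * (R : ℤ)) huv
    -- sum over x₂ of B at differences is at most the full tsum
    have hrow : ∀ x₁ : ℕ,
        (∑ x₂ ∈ Finset.range (R * n), B ((x₁ : ℤ) - (x₂ : ℤ))) ≤ A R := by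
      intro x₁
      have hinj : ∀ a ∈ Finset.range (R * n), ∀ b ∈ Finset.range (R * n),
          (fun x₂ : ℕ => (x₁ : ℤ) - (x₂ : ℤ)) a = (fun x₂ : ℕ => (x₁ : ℤ) - (x₂ : ℤ)) b
          → a = b := by
        intro a _ b _ hab
        simp only at hab
        omega
      have himg : ∑ a ∈ (Finset.range (R * n)).image
            (fun x₂ : ℕ => (x₁ : ℤ) - (x₂ : ℤ)), B a
          = ∑ x₂ ∈ Finset.range (R * n), B ((x₁ : ℤ) - (x₂ : ℤ)) :=
        Finset.sum_image hinj
      rw [← himg]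
      rw [← hBtsum]
      exact Summable.sum_le_tsum _ (fun a _ => hB0 a) hBsum
    calc (1 / (R : ℝ)) *
          ∑ x₁ ∈ Finset.range (R * n), ∑ x₂ ∈ Finset.range (R * n),
            ∑' y₁ : ℤ, ∑' y₂ : ℤ,
              (if r * (R : ℤ) < y₁ ∧ y₂ ≤ s * (R : ℤ)
              then F ((x₁ : ℤ) - (x₂ : ℤ), y₁ - y₂) else 0)
        ≤ (1 / (R : ℝ)) * ∑ x₁ ∈ Finset.range (R * n), A R := by
          apply mul_le_mul_of_nonneg_left _ (by positivity)
          apply Finset.sum_le_sum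
          intro x₁ _
          calc (∑ x₂ ∈ Finset.range (R * n),
              ∑' y₁ : ℤ, ∑' y₂ : ℤ,
                (if r * (R : ℤ) < y₁ ∧ y₂ ≤ s * (R : ℤ)
                then F ((x₁ : ℤ) - (x₂ : ℤ), y₁ - y₂) else 0))
              ≤ ∑ x₂ ∈ Finset.range (R * n), B ((x₁ : ℤ) - (x₂ : ℤ)) :=
                Finset.sum_le_sum (fun x₂ _ => hT ((x₁ : ℤ) - (x₂ : ℤ)))
            _ ≤ A R := hrow x₁
      _ = (n : ℝ) * A R := by
          rw [Finset.sum_const, Finset.card_range, nsmul_eq_mul]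
          push_cast
          field_simp
  · exact (by simpa using hAtendsto.const_mul (n : ℝ))
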